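/- Let (Ȳ,Z̄,V) be random variables over finite alphabets with joint pmf p'(ȳ,v)·∏_{m=1}^{M'} q'_m(z_m|y_m), and let B* be the set of vectors R' ∈ ℝ^{M'} with I(Ȳ_I;Z̄_I|Z̄_{I^c},V) ≤ Σ_{i∈I} R'_i for every nonempty I ⊆ {1,…,M'}. Define R' by R'_i = I(Y_i;Z_i|Z̄_{{1,…,i−1}},V) for i = 1,…,M'. Then R' ∈ B*, and for every m ∈ {0,1,…,M'−1} the constraint indexed by the set {m+1,…,M'} holds with equality: I(Ȳ_{{m+1,…,M'}};Z̄_{{m+1,…,M'}}|Z̄_{{1,…,m}},V) = Σ_{i=m+1}^{M'} R'_i. -/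

import Mathlib

open Finset
open scoped Classical

noncomputable section

set_option linter.unusedSectionVars false

/-- The distribution (pmf) of the random variable `X` under the pmf `P` on the finite
sample space `Ω`. -/
def dist {Ω α : Type*} [Fintype Ω] [Fintype α] (P : Ω → ℝ) (X : Ω → α) (a : α) : ℝ :=
  ∑ ω, if X ω = a then P ω else 0

/-- Shannon entropy (base 2) of the random variable `X` under the pmf `P`. -/
def Hent {Ω α : Type*} [Fintype Ω] [Fintype α] (P : Ω → ℝ) (X : Ω → α) : ℝ :=
  -∑ a, dist P X a * Real.logb 2 (dist P X a)

/-- Conditional entropy `H(X | Y)`. -/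
def condEnt {Ω α β : Type*} [Fintype Ω] [Fintype α] [Fintype β]
    (P : Ω → ℝ) (X : Ω → α) (Y : Ω → β) : ℝ :=
  Hent P (fun ω => (X ω, Y ω)) - Hent P Y

/-- Conditional mutual information `I(X ; Y | Z)`. -/
def condMI {Ω α β γ : Type*} [Fintype Ω] [Fintype α] [Fintype β] [Fintype γ]
    (P : Ω → ℝ) (X : Ω → α) (Y : Ω → β) (Z : Ω → γ) : ℝ :=
  Hent P (fun ω => (X ω, Z ω)) + Hent P (fun ω => (Y ω, Z ω))
    - Hent P (fun ω => (X ω, Y ω, Z ω)) - Hent P Z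

/-- The ε-strongly typical set condition for a sequence `xs` with respect to pmf `p`:
`|N(a|xs)/n − p(a)| < ε/|α|` for every letter `a`. -/
def StronglyTypical {α : Type*} [Fintype α] (p : α → ℝ) {n : ℕ} (xs : Fin n → α)
    (ε : ℝ) : Prop :=
  ∀ a : α, |((Finset.univ.filter fun k => xs k = a).card : ℝ) / n - p a|
    < ε / Fintype.card α

section YZV

variable {M' : ℕ}

/-- Canonical sample space for `(Ȳ, Z̄, V)`. -/
abbrev Samp (𝒴 𝒵 : Fin M' → Type*) (V : Type*) : Type _ :=
  (∀ i, 𝒴 i) × (∀ i, 𝒵 i) × V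

variable {𝒴 𝒵 : Fin M' → Type*} [∀ i, Fintype (𝒴 i)] [∀ i, Fintype (𝒵 i)]
  {V : Type*} [Fintype V]

/-- The joint pmf `p'(ȳ,v) · ∏ₘ q'ₘ(zₘ | yₘ)` on the canonical sample space: conditionally
on `(Ȳ,V)` the `Zₘ` are mutually independent and `Zₘ` depends only on `Yₘ`. -/
def Pjoint (p' : (∀ i, 𝒴 i) × V → ℝ) (q : ∀ m, 𝒴 m → 𝒵 m → ℝ) :
    Samp 𝒴 𝒵 V → ℝ :=
  fun ω => p' (ω.1, ω.2.2) * ∏ m, q m (ω.1 m) (ω.2.1 m)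

/-- `Ȳ_I`. -/
def Ybar (I : Finset (Fin M')) : Samp 𝒴 𝒵 V → (∀ i : I, 𝒴 i.1) := fun ω i => ω.1 i.1

/-- `Z̄_I`. -/
def Zbar (I : Finset (Fin M')) : Samp 𝒴 𝒵 V → (∀ i : I, 𝒵 i.1) := fun ω i => ω.2.1 i.1

/-- The pair `(Z̄_I, V)` used as a conditioning variable. -/
def ZbarV (I : Finset (Fin M')) : Samp 𝒴 𝒵 V → (∀ i : I, 𝒵 i.1) × V :=
  fun ω => (fun i => ω.2.1 i.1, ω.2.2)

/-- Membership in the region `B*`: `I(Ȳ_I; Z̄_I | Z̄_{Iᶜ}, V) ≤ Σ_{i∈I} R_i` for every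
nonempty `I ⊆ {1,…,M'}`. -/
def memBstar (p' : (∀ i, 𝒴 i) × V → ℝ) (q : ∀ m, 𝒴 m → 𝒵 m → ℝ)
    (R : Fin M' → ℝ) : Prop :=
  ∀ I : Finset (Fin M'), I.Nonempty →
    condMI (Pjoint p' q) (Ybar I) (Zbar I) (ZbarV Iᶜ) ≤ ∑ i ∈ I, R i

end YZV

/-! ### Auxiliary general lemmas about `dist`, `Hent`, `condMI` -/

section Generic
variable {Ω α β γ : Type*} [Fintype Ω] [Fintype α] [Fintype β] [Fintype γ] {P : Ω → ℝ}

lemma dist_nonneg' (hP : ∀ ω, 0 ≤ P ω) (X : Ω → α) (a : α) : 0 ≤ dist P X a :=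
  Finset.sum_nonneg fun ω _ => by by_cases h : X ω = a <;> simp [h, hP ω]

lemma le_dist (hP : ∀ ω, 0 ≤ P ω) (X : Ω → α) (ω : Ω) : P ω ≤ dist P X (X ω) := by
  have h := Finset.single_le_sum (f := fun ω' => if X ω' = X ω then P ω' else 0)
    (fun ω' _ => by by_cases h : X ω' = X ω <;> simp [h, hP ω']) (Finset.mem_univ ω)
  simpa [_root_.dist] using h

lemma sum_fiber (X : Ω → α) (f : α → ℝ) :
    ∑ a, dist P X a * f a = ∑ ω, P ω * f (X ω) := by
  unfold _root_.dist
  simp only [Finset.sum_mul, ite_mul, zero_mul]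
  rw [Finset.sum_comm]
  simp

lemma sum_dist (X : Ω → α) : ∑ a, dist P X a = ∑ ω, P ω := by
  simpa using sum_fiber (P := P) X (fun _ => (1:ℝ))

lemma Hent_eq (X : Ω → α) :
    Hent P X = -∑ ω, P ω * Real.logb 2 (dist P X (X ω)) := by
  rw [Hent, sum_fiber X (fun a => Real.logb 2 (dist P X a))]

lemma dist_congr {X : Ω → α} {X' : Ω → β} (ω : Ω)
    (h : ∀ ω', X ω' = X ω ↔ X' ω' = X' ω) :
    dist P X (X ω) = dist P X' (X' ω) :=
  Finset.sum_congr rfl fun ω' _ => if_congr (h ω') rfl rfl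

lemma Hent_congr {X : Ω → α} {X' : Ω → β}
    (h : ∀ ω ω', X ω = X ω' ↔ X' ω = X' ω') : Hent P X = Hent P X' := by
  rw [Hent_eq, Hent_eq]
  congr 1
  refine Finset.sum_congr rfl fun ω _ => ?_
  rw [dist_congr ω (fun ω' => h ω' ω)]

lemma dist_fst_marg (X : Ω → α) (Z : Ω → β) (z : β) :
    ∑ x, dist P (fun ω => (X ω, Z ω)) (x, z) = dist P Z z := by
  unfold _root_.dist
  rw [Finset.sum_comm]
  refine Finset.sum_congr rfl fun ω _ => ?_
  by_cases h : Z ω = z <;> simp [Prod.ext_iff, h]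

lemma condMI_nonneg (hP : ∀ ω, 0 ≤ P ω) (hP1 : ∑ ω, P ω = 1)
    (X : Ω → α) (Y : Ω → β) (Z : Ω → γ) : 0 ≤ condMI P X Y Z := by
  classical
  set pxz := dist P (fun ω => (X ω, Z ω)) with hpxz
  set pyz := dist P (fun ω => (Y ω, Z ω)) with hpyz
  set pxyz := dist P (fun ω => (X ω, Y ω, Z ω)) with hpxyz
  set pz := dist P Z with hpz
  set g : α × β × γ → ℝ :=
    fun p => pxz (p.1, p.2.2) * pyz (p.2.1, p.2.2) / (pxyz p * pz p.2.2) with hg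
  set L : Ω → ℝ := fun ω =>
    P ω * Real.logb 2 (pxyz (X ω, Y ω, Z ω)) + P ω * Real.logb 2 (pz (Z ω))
      - P ω * Real.logb 2 (pxz (X ω, Z ω)) - P ω * Real.logb 2 (pyz (Y ω, Z ω)) with hL
  have e : condMI P X Y Z = ∑ ω, L ω := by
    simp only [condMI, Hent_eq, hL]
    rw [Finset.sum_sub_distrib, Finset.sum_sub_distrib, Finset.sum_add_distrib]
    ring
  have hlog2 : (0:ℝ) < Real.log 2 := Real.log_pos (by norm_num)
  have key : ∀ ω, (P ω - P ω * g (X ω, Y ω, Z ω)) / Real.log 2 ≤ L ω := by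
    intro ω
    rcases eq_or_lt_of_le (hP ω) with h0 | h0
    · simp [hL, ← h0]
    · have h1 : 0 < pxz (X ω, Z ω) := lt_of_lt_of_le h0 (le_dist hP _ ω)
      have h2 : 0 < pyz (Y ω, Z ω) := lt_of_lt_of_le h0 (le_dist hP _ ω)
      have h3 : 0 < pxyz (X ω, Y ω, Z ω) := lt_of_lt_of_le h0 (le_dist hP _ ω)
      have h4 : 0 < pz (Z ω) := lt_of_lt_of_le h0 (le_dist hP _ ω)
      have ht : 0 < g (X ω, Y ω, Z ω) := by
        apply div_pos (mul_pos h1 h2) (mul_pos h3 h4)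
      have hlog : Real.log (g (X ω, Y ω, Z ω)) ≤ g (X ω, Y ω, Z ω) - 1 :=
        Real.log_le_sub_one_of_pos ht
      have hexp : Real.logb 2 (g (X ω, Y ω, Z ω))
          = Real.logb 2 (pxz (X ω, Z ω)) + Real.logb 2 (pyz (Y ω, Z ω))
            - Real.logb 2 (pxyz (X ω, Y ω, Z ω)) - Real.logb 2 (pz (Z ω)) := by
        rw [hg]
        rw [Real.logb_div (by positivity) (by positivity),
          Real.logb_mul (ne_of_gt h1) (ne_of_gt h2),
          Real.logb_mul (ne_of_gt h3) (ne_of_gt h4)]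
        ring
      have hLω : L ω = P ω * (-Real.logb 2 (g (X ω, Y ω, Z ω))) := by
        rw [hexp]; simp [hL]; ring
      rw [hLω]
      have : (1 - g (X ω, Y ω, Z ω)) / Real.log 2 ≤ -Real.logb 2 (g (X ω, Y ω, Z ω)) := by
        rw [Real.logb, ← neg_div]
        exact div_le_div_of_nonneg_right (by linarith) hlog2.le
      calc (P ω - P ω * g (X ω, Y ω, Z ω)) / Real.log 2
          = P ω * ((1 - g (X ω, Y ω, Z ω)) / Real.log 2) := by ring
        _ ≤ P ω * (-Real.logb 2 (g (X ω, Y ω, Z ω))) :=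
            mul_le_mul_of_nonneg_left this (le_of_lt h0)
  have hS : ∑ ω, P ω * g (X ω, Y ω, Z ω) ≤ 1 := by
    rw [← sum_fiber (fun ω => (X ω, Y ω, Z ω)) g]
    have step1 : ∑ p : α × β × γ, pxyz p * g p
        ≤ ∑ p : α × β × γ, pxz (p.1, p.2.2) * pyz (p.2.1, p.2.2) / pz p.2.2 := by
      refine Finset.sum_le_sum fun p _ => ?_
      rcases eq_or_ne (pxyz p) 0 with h | h
      · rw [h, zero_mul]
        have := dist_nonneg' hP (fun ω => (X ω, Z ω)) (p.1, p.2.2)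
        have := dist_nonneg' hP (fun ω => (Y ω, Z ω)) (p.2.1, p.2.2)
        have := dist_nonneg' hP Z p.2.2
        positivity
      · rcases eq_or_ne (pz p.2.2) 0 with h' | h'
        · simp [hg, h']
        · rw [hg]
          apply le_of_eq
          field_simp
    have step2 : ∑ p : α × β × γ, pxz (p.1, p.2.2) * pyz (p.2.1, p.2.2) / pz p.2.2
        = ∑ z, pz z * pz z / pz z := by
      rw [Fintype.sum_prod_type, Finset.sum_comm]
      rw [show (∑ yz : β × γ, ∑ x, pxz (x, yz.2) * pyz (yz.1, yz.2) / pz yz.2)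
          = ∑ y, ∑ z, ∑ x, pxz (x, z) * pyz (y, z) / pz z from Fintype.sum_prod_type _]
      rw [Finset.sum_comm]
      refine Finset.sum_congr rfl fun z _ => ?_
      have hy : ∀ y : β, ∑ x, pxz (x, z) * pyz (y, z) / pz z
          = pz z * pyz (y, z) / pz z := by
        intro y
        rw [← Finset.sum_div, ← Finset.sum_mul, hpxz, dist_fst_marg]
      rw [Finset.sum_congr rfl fun y _ => hy y, ← Finset.sum_div, ← Finset.mul_sum,
        hpyz, dist_fst_marg]
    have step3 : ∑ z, pz z * pz z / pz z ≤ ∑ z, pz z := by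
      refine Finset.sum_le_sum fun z _ => ?_
      rcases eq_or_ne (pz z) 0 with h | h
      · simp [h]
      · rw [mul_div_assoc, div_self h, mul_one]
    have step4 : ∑ z, pz z = 1 := by rw [hpz, sum_dist, hP1]
    linarith
  have final : 0 ≤ ∑ ω, L ω := by
    have h1 : (∑ ω, (P ω - P ω * g (X ω, Y ω, Z ω))) / Real.log 2 ≤ ∑ ω, L ω := by
      rw [Finset.sum_div]
      exact Finset.sum_le_sum fun ω _ => key ω
    have h2 : ∑ ω, (P ω - P ω * g (X ω, Y ω, Z ω))
        = 1 - ∑ ω, P ω * g (X ω, Y ω, Z ω) := by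
      rw [Finset.sum_sub_distrib, hP1]
    have h3 : 0 ≤ (∑ ω, (P ω - P ω * g (X ω, Y ω, Z ω))) / Real.log 2 := by
      rw [h2]
      apply div_nonneg (by linarith) (le_of_lt hlog2)
    linarith
  rw [e]; exact final

end Generic

/-! ### Agreement of dependent functions on a finset -/

section Req
variable {M' : ℕ} {F : Fin M' → Type*}

def req (S : Finset (Fin M')) (f g : ∀ m, F m) : Prop := ∀ j ∈ S, f j = g j

lemma req_insert {i : Fin M'} {S : Finset (Fin M')} {f g : ∀ m, F m} :
    req (insert i S) f g ↔ f i = g i ∧ req S f g := by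
  simp [req, Finset.mem_insert, or_imp, forall_and]

lemma req_union {A B : Finset (Fin M')} {f g : ∀ m, F m} :
    req (A ∪ B) f g ↔ req A f g ∧ req B f g := by
  simp [req, Finset.mem_union, or_imp, forall_and]

lemma req_empty {f g : ∀ m, F m} : req (∅ : Finset (Fin M')) f g := by
  simp [req]

lemma req_singleton {i : Fin M'} {f g : ∀ m, F m} :
    req ({i} : Finset (Fin M')) f g ↔ f i = g i := by
  simp [req]

end Req

/-! ### Canonical entropies and congruences -/

section Congr
variable {M' : ℕ} {𝒴 𝒵 : Fin M' → Type*} [∀ i, Fintype (𝒴 i)] [∀ i, Fintype (𝒵 i)]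
  {V : Type*} [Fintype V]

lemma Ybar_eq_iff {S : Finset (Fin M')} {ω ω' : Samp 𝒴 𝒵 V} :
    Ybar S ω = Ybar S ω' ↔ req S ω.1 ω'.1 := by
  simp [Ybar, funext_iff, Subtype.forall, req]

lemma Zbar_eq_iff {S : Finset (Fin M')} {ω ω' : Samp 𝒴 𝒵 V} :
    Zbar S ω = Zbar S ω' ↔ req S ω.2.1 ω'.2.1 := by
  simp [Zbar, funext_iff, Subtype.forall, req]

lemma ZbarV_eq_iff {S : Finset (Fin M')} {ω ω' : Samp 𝒴 𝒵 V} :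
    ZbarV S ω = ZbarV S ω' ↔ (req S ω.2.1 ω'.2.1 ∧ ω.2.2 = ω'.2.2) := by
  simp [ZbarV, Prod.ext_iff, funext_iff, Subtype.forall, req]

variable (P : Samp 𝒴 𝒵 V → ℝ)

def Efun (W S : Finset (Fin M')) : ℝ :=
  Hent P (fun ω => (Ybar W ω, ZbarV S ω))

lemma C1 (A B : Finset (Fin M')) :
    Hent P (fun ω => (Zbar A ω, ZbarV B ω)) = Efun P ∅ (A ∪ B) := by
  refine Hent_congr fun ω ω' => ?_
  simp only [Prod.mk.injEq, Ybar_eq_iff, Zbar_eq_iff, ZbarV_eq_iff, req_union]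
  have he : req (∅ : Finset (Fin M')) ω.1 ω'.1 := req_empty
  tauto

lemma C2 (W A B : Finset (Fin M')) :
    Hent P (fun ω => (Ybar W ω, Zbar A ω, ZbarV B ω)) = Efun P W (A ∪ B) := by
  refine Hent_congr fun ω ω' => ?_
  simp only [Prod.mk.injEq, Ybar_eq_iff, Zbar_eq_iff, ZbarV_eq_iff, req_union]
  tauto

lemma C3 (S : Finset (Fin M')) :
    Hent P (ZbarV (𝒴 := 𝒴) S) = Efun P ∅ S := by
  refine Hent_congr fun ω ω' => ?_
  simp only [Prod.mk.injEq, Ybar_eq_iff, ZbarV_eq_iff]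
  have he : req (∅ : Finset (Fin M')) ω.1 ω'.1 := req_empty
  tauto

lemma C5 (S : Finset (Fin M')) (i : Fin M') :
    Hent P (fun ω => (ω.1 i, ZbarV S ω)) = Efun P {i} S := by
  refine Hent_congr fun ω ω' => ?_
  simp only [Prod.mk.injEq, Ybar_eq_iff, ZbarV_eq_iff, req_singleton]

lemma C6 (S : Finset (Fin M')) (i : Fin M') :
    Hent P (fun ω => (ω.1 i, (ω.2.1 i, ZbarV S ω))) = Efun P {i} (insert i S) := by
  refine Hent_congr fun ω ω' => ?_
  simp only [Prod.mk.injEq, Ybar_eq_iff, ZbarV_eq_iff, req_singleton, req_insert]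
  tauto

lemma C7 (S : Finset (Fin M')) (i : Fin M') :
    Hent P (fun ω => (ω.2.1 i, ZbarV S ω)) = Efun P ∅ (insert i S) := by
  refine Hent_congr fun ω ω' => ?_
  simp only [Prod.mk.injEq, Ybar_eq_iff, ZbarV_eq_iff, req_insert]
  have he : req (∅ : Finset (Fin M')) ω.1 ω'.1 := req_empty
  tauto

lemma C8 (A B : Finset (Fin M')) (i : Fin M') :
    Hent P (fun ω => (ω.2.1 i, (Zbar A ω, ZbarV B ω))) = Efun P ∅ (insert i (A ∪ B)) := by
  refine Hent_congr fun ω ω' => ?_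
  simp only [Prod.mk.injEq, Ybar_eq_iff, Zbar_eq_iff, ZbarV_eq_iff, req_insert, req_union]
  have he : req (∅ : Finset (Fin M')) ω.1 ω'.1 := req_empty
  tauto

end Congr

/-! ### Distribution computations for `Pjoint` -/

section DistComp
variable {M' : ℕ} {𝒴 𝒵 : Fin M' → Type*} [∀ i, Fintype (𝒴 i)] [∀ i, Fintype (𝒵 i)]
  {V : Type*} [Fintype V]
  (p' : (∀ i, 𝒴 i) × V → ℝ) (q : ∀ m, 𝒴 m → 𝒵 m → ℝ)

lemma zsum_req (G : ∀ m, 𝒵 m → ℝ) (S : Finset (Fin M')) (z : ∀ m, 𝒵 m) :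
    ∑ z' : ∀ m, 𝒵 m, (if req S z' z then (1:ℝ) else 0) * ∏ m, G m (z' m)
    = (∏ m ∈ S, G m (z m)) * ∏ m ∈ Sᶜ, ∑ zm, G m zm := by
  classical
  set F : ∀ m, 𝒵 m → ℝ :=
    fun m zm => if m ∈ S then (if zm = z m then G m zm else 0) else G m zm with hF
  have h1 : ∀ z' : ∀ m, 𝒵 m,
      (if req S z' z then (1:ℝ) else 0) * ∏ m, G m (z' m) = ∏ m, F m (z' m) := by
    intro z'
    by_cases h : req S z' z
    · rw [if_pos h, one_mul]
      refine Finset.prod_congr rfl fun m _ => ?_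
      by_cases hm : m ∈ S
      · simp [hF, hm, h m hm]
      · simp [hF, hm]
    · rw [if_neg h, zero_mul]
      rw [req] at h; push_neg at h
      obtain ⟨j, hj, hne⟩ := h
      refine (Finset.prod_eq_zero (Finset.mem_univ j) ?_).symm
      simp [hF, hj, hne]
  rw [Finset.sum_congr rfl fun z' _ => h1 z', ← Fintype.prod_sum]
  rw [← Finset.prod_mul_prod_compl S]
  congr 1
  · refine Finset.prod_congr rfl fun m hm => ?_
    simp [hF, hm, Finset.sum_ite_eq']
  · refine Finset.prod_congr rfl fun m hm => ?_
    rw [Finset.mem_compl] at hm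
    simp [hF, hm]

lemma Pjoint_nonneg (hp'0 : ∀ yv, 0 ≤ p' yv) (hq0 : ∀ m y z, 0 ≤ q m y z) :
    ∀ ω, 0 ≤ Pjoint p' q ω := fun _ =>
  mul_nonneg (hp'0 _) (Finset.prod_nonneg fun m _ => hq0 _ _ _)

lemma Pjoint_sum_one (hp'1 : ∑ yv, p' yv = 1) (hq1 : ∀ m y, ∑ z, q m y z = 1) :
    ∑ ω, Pjoint p' q ω = 1 := by
  rw [Fintype.sum_prod_type]
  have hy : ∀ y : ∀ m, 𝒴 m, (∑ zv : (∀ m, 𝒵 m) × V, Pjoint p' q (y, zv))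
      = ∑ v, p' (y, v) := by
    intro y
    rw [Fintype.sum_prod_type]
    have h1 : ∀ z : ∀ m, 𝒵 m, (∑ v, Pjoint p' q (y, z, v))
        = (∑ v, p' (y, v)) * ∏ m, q m (y m) (z m) := by
      intro z
      rw [Finset.sum_mul]
      rfl
    rw [Finset.sum_congr rfl fun z _ => h1 z, ← Finset.mul_sum, ← Fintype.prod_sum]
    have h2 : ∀ m ∈ (Finset.univ : Finset (Fin M')), (∑ zm, q m (y m) zm) = 1 :=
      fun m _ => hq1 m (y m)
    rw [Finset.prod_congr rfl h2, Finset.prod_const_one, mul_one]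
  rw [Finset.sum_congr rfl fun y _ => hy y, ← Fintype.sum_prod_type, hp'1]

lemma distYZV_at (hq1 : ∀ m y, ∑ z, q m y z = 1) (W S : Finset (Fin M'))
    (ω : Samp 𝒴 𝒵 V) :
    dist (Pjoint p' q) (fun ω' => (Ybar W ω', ZbarV S ω')) (Ybar W ω, ZbarV S ω)
    = ∑ y : ∀ m, 𝒴 m, (if req W y ω.1 then (1:ℝ) else 0)
        * (p' (y, ω.2.2) * ∏ m ∈ S, q m (y m) (ω.2.1 m)) := by
  classical
  rw [_root_.dist, Fintype.sum_prod_type]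
  refine Finset.sum_congr rfl fun y _ => ?_
  rw [Fintype.sum_prod_type]
  have hcond : ∀ (z : ∀ m, 𝒵 m) (v : V),
      ((Ybar W ((y, z, v) : Samp 𝒴 𝒵 V), ZbarV S ((y, z, v) : Samp 𝒴 𝒵 V))
          = (Ybar W ω, ZbarV S ω))
        ↔ (req W y ω.1 ∧ (req S z ω.2.1 ∧ v = ω.2.2)) := by
    intro z v
    rw [Prod.mk.injEq]
    rw [show (Ybar W ((y, z, v) : Samp 𝒴 𝒵 V) = Ybar W ω) ↔ req W y ω.1 from Ybar_eq_iff]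
    rw [show (ZbarV S ((y, z, v) : Samp 𝒴 𝒵 V) = ZbarV S ω)
        ↔ (req S z ω.2.1 ∧ v = ω.2.2) from ZbarV_eq_iff]
  simp only [hcond]
  by_cases hW : req W y ω.1
  · simp only [hW, true_and, if_true, one_mul]
    refine Eq.trans (b := ∑ z : ∀ m, 𝒵 m, (if req S z ω.2.1 then (1:ℝ) else 0)
        * (p' (y, ω.2.2) * ∏ m, q m (y m) (z m)))
      (Finset.sum_congr rfl fun z _ => ?_) ?_
    · by_cases hS : req S z ω.2.1
      · simp only [hS, true_and, if_true, one_mul]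
        rw [Finset.sum_ite_eq' Finset.univ ω.2.2 (fun v => Pjoint p' q (y, z, v))]
        simp [Pjoint]
      · simp [hS]
    · have hmid : ∑ z : ∀ m, 𝒵 m, (if req S z ω.2.1 then (1:ℝ) else 0)
          * (p' (y, ω.2.2) * ∏ m, q m (y m) (z m))
          = p' (y, ω.2.2) * ∑ z : ∀ m, 𝒵 m, (if req S z ω.2.1 then (1:ℝ) else 0)
              * ∏ m, q m (y m) (z m) := by
        rw [Finset.mul_sum]
        exact Finset.sum_congr rfl fun z _ => by ring
      rw [hmid, zsum_req]
      have h2 : ∀ m ∈ Sᶜ, (∑ zm, q m (y m) zm) = 1 := fun m _ => hq1 m (y m)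
      rw [Finset.prod_congr rfl h2, Finset.prod_const_one, mul_one]
  · simp [hW]

lemma dist_factor_at (hq1 : ∀ m y, ∑ z, q m y z = 1) (W S : Finset (Fin M'))
    (i : Fin M') (hiW : i ∈ W) (hiS : i ∉ S) (ω : Samp 𝒴 𝒵 V) :
    dist (Pjoint p' q) (fun ω' => (Ybar W ω', ZbarV (insert i S) ω'))
        (Ybar W ω, ZbarV (insert i S) ω)
    = q i (ω.1 i) (ω.2.1 i) *
      dist (Pjoint p' q) (fun ω' => (Ybar W ω', ZbarV S ω')) (Ybar W ω, ZbarV S ω) := by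
  rw [distYZV_at p' q hq1, distYZV_at p' q hq1, Finset.mul_sum]
  refine Finset.sum_congr rfl fun y _ => ?_
  by_cases hA : req W y ω.1
  · rw [if_pos hA, Finset.prod_insert hiS, hA i hiW]
    ring
  · simp [hA]

/-- the value of each component of the corner point -/
def cQ (i : Fin M') : ℝ :=
  -∑ ω : Samp 𝒴 𝒵 V, Pjoint p' q ω * Real.logb 2 (q i (ω.1 i) (ω.2.1 i))

lemma EF (hp'0 : ∀ yv, 0 ≤ p' yv) (hq0 : ∀ m y z, 0 ≤ q m y z)
    (hq1 : ∀ m y, ∑ z, q m y z = 1) (W S : Finset (Fin M'))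
    (i : Fin M') (hiW : i ∈ W) (hiS : i ∉ S) :
    Efun (Pjoint p' q) W (insert i S) - Efun (Pjoint p' q) W S = cQ p' q i := by
  have hP0 := Pjoint_nonneg p' q hp'0 hq0
  rw [Efun, Efun, Hent_eq, Hent_eq, cQ]
  have key : ∀ ω : Samp 𝒴 𝒵 V,
      Pjoint p' q ω * Real.logb 2 (dist (Pjoint p' q)
          (fun ω' => (Ybar W ω', ZbarV (insert i S) ω'))
          (Ybar W ω, ZbarV (insert i S) ω))
      = Pjoint p' q ω * Real.logb 2 (q i (ω.1 i) (ω.2.1 i))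
        + Pjoint p' q ω * Real.logb 2 (dist (Pjoint p' q)
            (fun ω' => (Ybar W ω', ZbarV S ω')) (Ybar W ω, ZbarV S ω)) := by
    intro ω
    rcases eq_or_lt_of_le (hP0 ω) with h0 | h0
    · rw [← h0]; ring
    · have hs : 0 < dist (Pjoint p' q) (fun ω' => (Ybar W ω', ZbarV S ω'))
          (Ybar W ω, ZbarV S ω) := lt_of_lt_of_le h0 (le_dist hP0 _ ω)
      have hb : 0 < dist (Pjoint p' q) (fun ω' => (Ybar W ω', ZbarV (insert i S) ω'))
          (Ybar W ω, ZbarV (insert i S) ω) := lt_of_lt_of_le h0 (le_dist hP0 _ ω)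
      rw [dist_factor_at p' q hq1 W S i hiW hiS ω] at hb ⊢
      have hqne : q i (ω.1 i) (ω.2.1 i) ≠ 0 := by
        intro h; rw [h, zero_mul] at hb; exact lt_irrefl _ hb
      rw [Real.logb_mul hqne (ne_of_gt hs), mul_add]
  rw [Finset.sum_congr rfl fun ω _ => key ω, Finset.sum_add_distrib]
  ring

end DistComp

/-! ### Telescoping over an index set -/

section Tele
variable {M' : ℕ}

/-- The conditioning set `Iᶜ ∪ {j ∈ I | j < i}` used in the chain rule. -/
def Ti (I : Finset (Fin M')) (i : Fin M') : Finset (Fin M') :=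
  Iᶜ ∪ I.filter (fun j => j < i)

lemma tele (G : Finset (Fin M') → ℝ) (I : Finset (Fin M')) :
    G Finset.univ - G Iᶜ = ∑ i ∈ I, (G (insert i (Ti I i)) - G (Ti I i)) := by
  classical
  set U : ℕ → Finset (Fin M') := fun k => Iᶜ ∪ I.filter (fun j : Fin M' => (j:ℕ) < k) with hU
  have aux : ∀ k, G (U k) - G Iᶜ
      = ∑ i ∈ I.filter (fun j : Fin M' => (j:ℕ) < k), (G (insert i (Ti I i)) - G (Ti I i)) := by
    intro k
    induction k with
    | zero =>
      have h0 : U 0 = Iᶜ := by ext j; simp [hU]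
      have h0' : I.filter (fun j : Fin M' => (j:ℕ) < 0) = ∅ := by ext j; simp
      rw [h0, h0']; simp
    | succ k ih =>
      by_cases hk : k < M'
      · set i : Fin M' := ⟨k, hk⟩ with hi
        by_cases hiI : i ∈ I
        · have hf : I.filter (fun j : Fin M' => (j:ℕ) < k+1)
              = insert i (I.filter (fun j : Fin M' => (j:ℕ) < k)) := by
            ext j
            simp only [Finset.mem_filter, Finset.mem_insert]
            constructor
            · rintro ⟨hj, hlt⟩
              rcases eq_or_lt_of_le (Nat.lt_succ_iff.mp hlt) with h | h
              · left; exact Fin.ext h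
              · right; exact ⟨hj, h⟩
            · rintro (rfl | ⟨hj, hlt⟩)
              · exact ⟨hiI, Nat.lt_succ_self k⟩
              · exact ⟨hj, Nat.lt_succ_of_lt hlt⟩
          have hU1 : U (k+1) = insert i (U k) := by
            ext j
            simp only [hU, Finset.mem_union, Finset.mem_insert, Finset.mem_filter,
              Finset.mem_compl]
            constructor
            · rintro (h | ⟨hj, hlt⟩)
              · right; left; exact h
              · rcases eq_or_lt_of_le (Nat.lt_succ_iff.mp hlt) with h' | h'
                · left; exact Fin.ext h'
                · right; right; exact ⟨hj, h'⟩
            · rintro (rfl | h | ⟨hj, hlt⟩)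
              · right; exact ⟨hiI, Nat.lt_succ_self k⟩
              · left; exact h
              · right; exact ⟨hj, Nat.lt_succ_of_lt hlt⟩
          have hUT : U k = Ti I i := by
            ext j
            simp only [hU, Ti, Finset.mem_union, Finset.mem_filter, Fin.lt_def]
            exact Iff.rfl
          have hnot : i ∉ I.filter (fun j : Fin M' => (j:ℕ) < k) := by simp [hi]
          rw [hf, Finset.sum_insert hnot, ← ih, hU1, hUT]
          ring
        · have hf : I.filter (fun j : Fin M' => (j:ℕ) < k+1) = I.filter (fun j : Fin M' => (j:ℕ) < k) := by
            ext j
            simp only [Finset.mem_filter]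
            constructor
            · rintro ⟨hj, hlt⟩
              refine ⟨hj, ?_⟩
              rcases eq_or_lt_of_le (Nat.lt_succ_iff.mp hlt) with h | h
              · exact absurd hj (by rw [show j = i from Fin.ext h]; exact hiI)
              · exact h
            · rintro ⟨hj, hlt⟩; exact ⟨hj, by omega⟩
          have hU1 : U (k+1) = U k := by
            simp only [hU]
            rw [show I.filter (fun j : Fin M' => (j:ℕ) < k+1) = I.filter (fun j : Fin M' => (j:ℕ) < k) from hf]
          rw [hU1, hf]; exact ih
      · have hf : I.filter (fun j : Fin M' => (j:ℕ) < k+1) = I.filter (fun j : Fin M' => (j:ℕ) < k) := by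
          ext j
          simp only [Finset.mem_filter]
          have := j.isLt
          constructor <;> (rintro ⟨hj, h⟩; exact ⟨hj, by omega⟩)
        have hU1 : U (k+1) = U k := by
          simp only [hU]
          rw [hf]
        rw [hU1, hf]; exact ih
  have hUM : U M' = Finset.univ := by
    ext j
    simp only [hU, Finset.mem_union, Finset.mem_filter, Finset.mem_compl, Finset.mem_univ,
      iff_true]
    by_cases h : j ∈ I
    · right; exact ⟨h, j.isLt⟩
    · left; exact h
  have hfM : I.filter (fun j : Fin M' => (j:ℕ) < M') = I := by
    ext j; simp [j.isLt]
  have h := aux M'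
  rw [hUM, hfM] at h
  exact h

end Tele

/-! ### Monotonicity: conditioning on more reduces conditional entropy increments -/

section Mono
variable {M' : ℕ} {𝒴 𝒵 : Fin M' → Type*} [∀ i, Fintype (𝒴 i)] [∀ i, Fintype (𝒵 i)]
  {V : Type*} [Fintype V]
  (p' : (∀ i, 𝒴 i) × V → ℝ) (q : ∀ m, 𝒴 m → 𝒵 m → ℝ)

lemma Emono (hp'0 : ∀ yv, 0 ≤ p' yv) (hp'1 : ∑ yv, p' yv = 1)
    (hq0 : ∀ m y z, 0 ≤ q m y z) (hq1 : ∀ m y, ∑ z, q m y z = 1)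
    (i : Fin M') (S' S : Finset (Fin M')) (hsub : S' ⊆ S) :
    Efun (Pjoint p' q) ∅ (insert i S) - Efun (Pjoint p' q) ∅ S
      ≤ Efun (Pjoint p' q) ∅ (insert i S') - Efun (Pjoint p' q) ∅ S' := by
  have h := condMI_nonneg (Pjoint_nonneg p' q hp'0 hq0) (Pjoint_sum_one p' q hp'1 hq1)
    (fun ω : Samp 𝒴 𝒵 V => ω.2.1 i) (Zbar (S \ S')) (ZbarV S')
  rw [condMI] at h
  rw [C7, C8, C1, C3, Finset.sdiff_union_of_subset hsub] at h
  linarith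

end Mono

/-! ### Assembly -/

section Assemble
variable {M' : ℕ} {𝒴 𝒵 : Fin M' → Type*} [∀ i, Fintype (𝒴 i)] [∀ i, Fintype (𝒵 i)]
  {V : Type*} [Fintype V]
  (p' : (∀ i, 𝒴 i) × V → ℝ) (q : ∀ m, 𝒴 m → 𝒵 m → ℝ)

lemma not_mem_Ti {I : Finset (Fin M')} {i : Fin M'} (hi : i ∈ I) : i ∉ Ti I i := by
  simp [Ti, hi]

lemma Li_subset_Ti {I : Finset (Fin M')} {i : Fin M'} (hi : i ∈ I) :
    Finset.univ.filter (fun j : Fin M' => j < i) ⊆ Ti I i := by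
  intro j hj
  simp only [Finset.mem_filter, Finset.mem_univ, true_and] at hj
  by_cases hjI : j ∈ I
  · exact Finset.mem_union_right _ (Finset.mem_filter.mpr ⟨hjI, hj⟩)
  · exact Finset.mem_union_left _ (Finset.mem_compl.mpr hjI)

lemma condMI_constraint (hp'0 : ∀ yv, 0 ≤ p' yv) (hq0 : ∀ m y z, 0 ≤ q m y z)
    (hq1 : ∀ m y, ∑ z, q m y z = 1) (I : Finset (Fin M')) :
    condMI (Pjoint p' q) (Ybar I) (Zbar I) (ZbarV Iᶜ)
    = ∑ i ∈ I, ((Efun (Pjoint p' q) ∅ (insert i (Ti I i))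
        - Efun (Pjoint p' q) ∅ (Ti I i)) - cQ p' q i) := by
  have e1 : Hent (Pjoint p' q) (fun ω : Samp 𝒴 𝒵 V => (Ybar I ω, ZbarV Iᶜ ω))
      = Efun (Pjoint p' q) I Iᶜ := rfl
  have h2 : Hent (Pjoint p' q) (fun ω : Samp 𝒴 𝒵 V => (Zbar I ω, ZbarV Iᶜ ω))
      = Efun (Pjoint p' q) ∅ Finset.univ := by
    rw [C1, Finset.union_compl]
  have h3 : Hent (Pjoint p' q) (fun ω : Samp 𝒴 𝒵 V => (Ybar I ω, Zbar I ω, ZbarV Iᶜ ω))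
      = Efun (Pjoint p' q) I Finset.univ := by
    rw [C2, Finset.union_compl]
  have h4 : Hent (Pjoint p' q) (ZbarV (𝒴 := 𝒴) Iᶜ) = Efun (Pjoint p' q) ∅ Iᶜ := C3 _ Iᶜ
  simp only [condMI]
  rw [e1, h2, h3, h4]
  have tY := tele (Efun (Pjoint p' q) I) I
  have tZ := tele (Efun (Pjoint p' q) ∅) I
  have tY' : Efun (Pjoint p' q) I Finset.univ - Efun (Pjoint p' q) I Iᶜ
      = ∑ i ∈ I, cQ p' q i := by
    rw [tY]
    refine Finset.sum_congr rfl fun i hi => ?_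
    exact EF p' q hp'0 hq0 hq1 I (Ti I i) i hi (not_mem_Ti hi)
  rw [Finset.sum_sub_distrib]
  linarith

lemma R_val (hp'0 : ∀ yv, 0 ≤ p' yv) (hq0 : ∀ m y z, 0 ≤ q m y z)
    (hq1 : ∀ m y, ∑ z, q m y z = 1) (i : Fin M') :
    condMI (Pjoint p' q) (fun ω : Samp 𝒴 𝒵 V => ω.1 i)
      (fun ω : Samp 𝒴 𝒵 V => ω.2.1 i)
      (ZbarV (Finset.univ.filter fun j : Fin M' => j < i))
    = (Efun (Pjoint p' q) ∅ (insert i (Finset.univ.filter fun j : Fin M' => j < i))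
        - Efun (Pjoint p' q) ∅ (Finset.univ.filter fun j : Fin M' => j < i))
      - cQ p' q i := by
  have hiL : i ∉ Finset.univ.filter fun j : Fin M' => j < i := by simp
  simp only [condMI]
  rw [C5, C7, C6, C3]
  have h := EF p' q hp'0 hq0 hq1 {i} (Finset.univ.filter fun j : Fin M' => j < i) i
    (Finset.mem_singleton_self i) hiL
  linarith

end Assemble

/-- Lemma B.10 (le:cornQ) of the paper: the vector `R'` with
`R'_i = I(Y_i; Z_i | Z̄_{{1,…,i−1}}, V)` belongs to `B*`, and for every `m ∈ {0,…,M'−1}`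
the constraint indexed by the tail set `{m+1,…,M'}` holds with equality:
`I(Ȳ_{{m+1,…,M'}}; Z̄_{{m+1,…,M'}} | Z̄_{{1,…,m}}, V) = Σ_{i=m+1}^{M'} R'_i`. -/
theorem statement_12 (M' : ℕ) (𝒴 𝒵 : Fin M' → Type) [∀ i, Fintype (𝒴 i)]
    [∀ i, Fintype (𝒵 i)] (V : Type) [Fintype V]
    (p' : (∀ i, 𝒴 i) × V → ℝ) (q : ∀ m, 𝒴 m → 𝒵 m → ℝ)
    (hp'0 : ∀ yv, 0 ≤ p' yv) (hp'1 : ∑ yv, p' yv = 1)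
    (hq0 : ∀ m y z, 0 ≤ q m y z) (hq1 : ∀ m y, ∑ z, q m y z = 1)
    (R : Fin M' → ℝ)
    (hR : ∀ i : Fin M',
      R i = condMI (Pjoint p' q)
        (fun ω : Samp 𝒴 𝒵 V => ω.1 i)
        (fun ω : Samp 𝒴 𝒵 V => ω.2.1 i)
        (ZbarV (Finset.univ.filter fun j : Fin M' => j < i))) :
    memBstar p' q R ∧
      ∀ m : ℕ, m < M' →
        condMI (Pjoint p' q)
            (Ybar (Finset.univ.filter fun i : Fin M' => m ≤ (i : ℕ)))
            (Zbar (Finset.univ.filter fun i : Fin M' => m ≤ (i : ℕ)))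
            (ZbarV (Finset.univ.filter fun i : Fin M' => (i : ℕ) < m))
          = ∑ i ∈ Finset.univ.filter (fun i : Fin M' => m ≤ (i : ℕ)), R i := by
  have hRval : ∀ i : Fin M', R i
      = (Efun (Pjoint p' q) ∅ (insert i (Finset.univ.filter fun j : Fin M' => j < i))
          - Efun (Pjoint p' q) ∅ (Finset.univ.filter fun j : Fin M' => j < i))
        - cQ p' q i := by
    intro i
    rw [hR i, R_val p' q hp'0 hq0 hq1 i]
  constructor
  · intro I _
    rw [condMI_constraint p' q hp'0 hq0 hq1 I]
    refine Finset.sum_le_sum fun i hi => ?_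
    rw [hRval i]
    have hmono := Emono p' q hp'0 hp'1 hq0 hq1 i
      (Finset.univ.filter fun j : Fin M' => j < i) (Ti I i) (Li_subset_Ti hi)
    linarith
  · intro m hm
    set I : Finset (Fin M') := Finset.univ.filter (fun i : Fin M' => m ≤ (i : ℕ)) with hI
    have hIc : Iᶜ = Finset.univ.filter (fun i : Fin M' => (i : ℕ) < m) := by
      ext j
      simp only [hI, Finset.mem_compl, Finset.mem_filter, Finset.mem_univ, true_and]
      omega
    rw [← hIc, condMI_constraint p' q hp'0 hq0 hq1 I]
    refine Finset.sum_congr rfl fun i hi => ?_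
    have him : m ≤ (i : ℕ) := by
      simpa [hI] using hi
    have hTi : Ti I i = Finset.univ.filter (fun j : Fin M' => j < i) := by
      ext j
      simp only [Ti, hI, Finset.mem_union, Finset.mem_compl, Finset.mem_filter,
        Finset.mem_univ, true_and, Fin.lt_def]
      omega
    rw [hRval i, hTi]
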